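/- Let K ≥ 3, L ≥ 1 and let X be a balanced K×L matrix with entries in {0,1}, with balanced parameters a, b, c satisfying a ≠ b and a + (K−1)b ≠ 0. Let λ ∈ ℝ^K have nonnegative entries with ‖λ‖₁ = Σ_{k=1}^{K} λ_k, and let λ_n be a nonnegative real number. Then X Xᵀ is invertible and Tr( (X Xᵀ)⁻¹ X diag(Xᵀ λ) Xᵀ (X Xᵀ)⁻¹ ) + λ_n · Tr((X Xᵀ)⁻¹) = λ_n K (1 − b/(a+(K−1)b)) / (L(a−b)) + (‖λ‖₁/(L(a−b)²)) · ( a + (K−1)b + ((2−K)b² − 2ab)/(a+(K−1)b)² · ( a + 3b(K−1) + c(K−1)(K−2) ) ), where diag(v) denotes the diagonal matrix with diagonal entries given by the vector v. -/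

import Mathlib

open Finset Matrix

set_option maxHeartbeats 1000000 in
/-- For a balanced `K × L` `{0,1}` matrix `X` (`K ≥ 3`, `L ≥ 1`)
with balanced parameters `a, b, c`, `a ≠ b`, `a + (K−1)b ≠ 0`, a nonnegative
vector `λ ∈ ℝ^K` and a nonnegative noise intensity `λ_n`, the matrix `X Xᵀ` is
invertible and the estimation MSE
`Tr((X Xᵀ)⁻¹ X diag(Xᵀ λ) Xᵀ (X Xᵀ)⁻¹) + λ_n Tr((X Xᵀ)⁻¹)` equals
`λ_n K (1 − b/(a+(K−1)b)) / (L(a−b))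
 + (‖λ‖₁/(L(a−b)²)) (a + (K−1)b
     + ((2−K)b² − 2ab)/(a+(K−1)b)² (a + 3b(K−1) + c(K−1)(K−2)))`. -/
theorem stmt9 (K L : ℕ) (hK : 3 ≤ K) (hL : 1 ≤ L)
    (X : Matrix (Fin K) (Fin L) ℝ)
    (h01 : ∀ k l, X k l = 0 ∨ X k l = 1)
    (hbal : ∀ Θ₁ Θ₂ : Finset (Fin K), Θ₁.Nonempty → Θ₂.Nonempty →
      Θ₁.card = Θ₂.card →
      ∑ l : Fin L, ∏ k ∈ Θ₁, X k l = ∑ l : Fin L, ∏ k ∈ Θ₂, X k l)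
    (a b c : ℝ)
    (ha : ∀ Θ : Finset (Fin K), Θ.card = 1 →
      ∑ l : Fin L, ∏ k ∈ Θ, X k l = (L : ℝ) * a)
    (hb : ∀ Θ : Finset (Fin K), Θ.card = 2 →
      ∑ l : Fin L, ∏ k ∈ Θ, X k l = (L : ℝ) * b)
    (hc : ∀ Θ : Finset (Fin K), Θ.card = 3 →
      ∑ l : Fin L, ∏ k ∈ Θ, X k l = (L : ℝ) * c)
    (hab : a ≠ b) (habK : a + ((K : ℝ) - 1) * b ≠ 0)
    (lam : Fin K → ℝ) (hlam : ∀ k, 0 ≤ lam k)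
    (lam_n : ℝ) (hlamn : 0 ≤ lam_n) :
    IsUnit (X * Xᵀ)
    ∧ Matrix.trace ((X * Xᵀ)⁻¹ * X * Matrix.diagonal (Xᵀ.mulVec lam) * Xᵀ
          * (X * Xᵀ)⁻¹)
        + lam_n * Matrix.trace (X * Xᵀ)⁻¹
      = lam_n * (K : ℝ) * (1 - b / (a + ((K : ℝ) - 1) * b))
            / ((L : ℝ) * (a - b))
        + ((∑ k : Fin K, lam k) / ((L : ℝ) * (a - b) ^ 2))
          * (a + ((K : ℝ) - 1) * b
            + ((2 - (K : ℝ)) * b ^ 2 - 2 * a * b)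
                / (a + ((K : ℝ) - 1) * b) ^ 2
              * (a + 3 * b * ((K : ℝ) - 1)
                + c * ((K : ℝ) - 1) * ((K : ℝ) - 2))) := by
  have hL' : (L : ℝ) ≠ 0 := Nat.cast_ne_zero.mpr (by omega)
  have hab' : a - b ≠ 0 := sub_ne_zero.mpr hab
  have hid : ∀ k l, X k l * X k l = X k l := by
    intro k l; rcases h01 k l with h | h <;> rw [h] <;> ring
  have ha' : ∀ i, ∑ l, X i l = (L : ℝ) * a := by
    intro i
    have := ha {i} (by simp)
    simpa using this
  have hb' : ∀ i j, i ≠ j → ∑ l, X i l * X j l = (L : ℝ) * b := by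
    intro i j hij
    have hcard : ({i, j} : Finset (Fin K)).card = 2 := by
      rw [Finset.card_insert_of_notMem (by simp [hij])]; simp
    have h2 := hb {i, j} hcard
    rw [← h2]
    refine Finset.sum_congr rfl fun l _ => ?_
    rw [Finset.prod_insert (by simp [hij]), Finset.prod_singleton]
  have hc' : ∀ i j k, i ≠ j → i ≠ k → j ≠ k →
      ∑ l, X i l * X j l * X k l = (L : ℝ) * c := by
    intro i j k hij hik hjk
    have hcard : ({i, j, k} : Finset (Fin K)).card = 3 := by
      rw [Finset.card_insert_of_notMem (by simp [hij, hik]),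
        Finset.card_insert_of_notMem (by simp [hjk])]; simp
    have h3 := hc {i, j, k} hcard
    rw [← h3]
    refine Finset.sum_congr rfl fun l _ => ?_
    rw [Finset.prod_insert (by simp [hij, hik]), Finset.prod_insert (by simp [hjk]),
      Finset.prod_singleton, mul_assoc]
  have hpair : ∀ i j, ∑ l, X i l * X j l = if i = j then (L : ℝ) * a else (L : ℝ) * b := by
    intro i j
    by_cases h : i = j
    · subst h; simp only [hid, if_pos rfl]; exact ha' i
    · rw [if_neg h]; exact hb' i j h
  have eK : ∀ v : ℝ, ∑ _x : Fin K, v = (K : ℝ) * v := by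
    intro v; simp [Finset.sum_const, Finset.card_univ]
  have eEq2 : ∀ (x : Fin K) (v : ℝ), ∑ i : Fin K, (if x = i then v else 0) = v := by
    intro x v; simp
  have hM : ∀ i j, (X * Xᵀ) i j = if i = j then (L : ℝ) * a else (L : ℝ) * b := by
    intro i j
    rw [Matrix.mul_apply]
    simpa [Matrix.transpose_apply] using hpair i j
  set α : ℝ := (L : ℝ) * (a - b) with hαdef
  set γ : ℝ := (L : ℝ) * (a + ((K : ℝ) - 1) * b) with hγdef
  have hα : α ≠ 0 := mul_ne_zero hL' hab'
  have hγ : γ ≠ 0 := mul_ne_zero hL' habK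
  set p : ℝ := α⁻¹ with hpdef
  set q : ℝ := -((L : ℝ) * b) / (α * γ) with hqdef
  set N : Matrix (Fin K) (Fin K) ℝ :=
    Matrix.of (fun i j => q + if i = j then p else 0) with hNdef
  have hNapp : ∀ i j, N i j = q + if i = j then p else 0 := fun i j => rfl
  have hMN : X * Xᵀ * N = 1 := by
    ext i j
    rw [Matrix.mul_apply]
    have key : ∀ k, (X * Xᵀ) i k * N k j
        = (L : ℝ) * b * q + (if i = k then α * q else 0)
          + (if k = j then (L : ℝ) * b * p else 0)
          + (if i = k then (if k = j then α * p else 0) else 0) := by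
      intro k
      rw [hM, hNapp]
      by_cases h1 : i = k <;> by_cases h2 : k = j
      · simp only [if_pos h1, if_pos h2]; rw [hαdef]; ring
      · simp only [if_pos h1, if_neg h2]; rw [hαdef]; ring
      · simp only [if_neg h1, if_pos h2]; ring
      · simp only [if_neg h1, if_neg h2]; ring
    simp only [key, Finset.sum_add_distrib, eK, eEq2, Finset.sum_ite_eq,
      Finset.sum_ite_eq', Finset.mem_univ, if_true]
    by_cases h : i = j
    · rw [if_pos h, h, Matrix.one_apply_eq]
      rw [hpdef, hqdef, hγdef, hαdef]
      field_simp
      have hne : a + b * ((K : ℝ) - 1) ≠ 0 := by intro h0; apply habK; linarith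
      field_simp
      ring
    · rw [if_neg h, Matrix.one_apply_ne h]
      rw [hpdef, hqdef, hγdef, hαdef]
      field_simp
      have hne : a + b * ((K : ℝ) - 1) ≠ 0 := by intro h0; apply habK; linarith
      field_simp
      ring
  have hunit : IsUnit (X * Xᵀ) :=
    (Matrix.isUnit_iff_isUnit_det _).2 (Matrix.isUnit_det_of_right_inverse hMN)
  have hinv : (X * Xᵀ)⁻¹ = N := Matrix.inv_eq_right_inv hMN
  refine ⟨hunit, ?_⟩
  rw [hinv]
  have htrN : Matrix.trace N = (K : ℝ) * (q + p) := by
    simp only [Matrix.trace, Matrix.diag_apply, hNapp, if_pos rfl, ite_true]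
    exact eK (q + p)
  set s : ℝ := (K : ℝ) * q ^ 2 + 2 * p * q with hsdef
  have hNN : ∀ i j, (N * N) i j = s + if i = j then p ^ 2 else 0 := by
    intro i j
    rw [Matrix.mul_apply]
    have key : ∀ k, N i k * N k j
        = q * q + (if i = k then p * q else 0) + (if k = j then q * p else 0)
          + (if i = k then (if k = j then p * p else 0) else 0) := by
      intro k
      rw [hNapp, hNapp]
      by_cases h1 : i = k <;> by_cases h2 : k = j
      · simp only [if_pos h1, if_pos h2]; ring
      · simp only [if_pos h1, if_neg h2]; ring
      · simp only [if_neg h1, if_pos h2]; ring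
      · simp only [if_neg h1, if_neg h2]; ring
    simp only [key, Finset.sum_add_distrib, eK, eEq2, Finset.sum_ite_eq,
      Finset.sum_ite_eq', Finset.mem_univ, if_true]
    rw [hsdef]
    by_cases h : i = j
    · rw [if_pos h, if_pos h]; ring
    · rw [if_neg h, if_neg h]; ring
  have hA : ∀ k i, (X * Matrix.diagonal (Xᵀ.mulVec lam) * Xᵀ) k i
      = ∑ j, lam j * ∑ l, X j l * X k l * X i l := by
    intro k i
    have e1 : (X * Matrix.diagonal (Xᵀ.mulVec lam) * Xᵀ) k i
        = ∑ l, (X k l * (∑ j, X j l * lam j)) * X i l := by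
      rw [Matrix.mul_apply]
      refine Finset.sum_congr rfl fun l _ => ?_
      rw [Matrix.mul_diagonal, Matrix.transpose_apply]
      rfl
    rw [e1]
    have e2 : ∀ l, (X k l * (∑ j, X j l * lam j)) * X i l
        = ∑ j, lam j * (X j l * X k l * X i l) := by
      intro l
      rw [Finset.mul_sum, Finset.sum_mul]
      exact Finset.sum_congr rfl fun j _ => by ring
    rw [Finset.sum_congr rfl fun l _ => e2 l, Finset.sum_comm]
    exact Finset.sum_congr rfl fun j _ => (Finset.mul_sum _ _ _).symm
  have hite : ∀ j : Fin K, ∑ k : Fin K, (if j = k then (L : ℝ) * a else (L : ℝ) * b)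
      = (L : ℝ) * a + ((K : ℝ) - 1) * ((L : ℝ) * b) := by
    intro j
    have h1 : ∀ k : Fin K, (if j = k then (L : ℝ) * a else (L : ℝ) * b)
        = (L : ℝ) * b + (if j = k then (L : ℝ) * a - (L : ℝ) * b else 0) := by
      intro k; split <;> ring
    simp only [h1, Finset.sum_add_distrib, eK, eEq2]
    ring
  have hTA : ∑ k : Fin K, (X * Matrix.diagonal (Xᵀ.mulVec lam) * Xᵀ) k k
      = (∑ j, lam j) * ((L : ℝ) * a + ((K : ℝ) - 1) * ((L : ℝ) * b)) := by
    simp only [hA]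
    rw [Finset.sum_comm]
    have h1 : ∀ j k : Fin K, (∑ l, X j l * X k l * X k l)
        = if j = k then (L : ℝ) * a else (L : ℝ) * b := by
      intro j k
      rw [← hpair j k]
      exact Finset.sum_congr rfl fun l _ => by rw [mul_assoc, hid]
    have h2 : ∀ j : Fin K, ∑ k : Fin K, lam j * ∑ l, X j l * X k l * X k l
        = lam j * ((L : ℝ) * a + ((K : ℝ) - 1) * ((L : ℝ) * b)) := by
      intro j
      rw [← Finset.mul_sum]
      congr 1
      rw [Finset.sum_congr rfl fun k _ => h1 j k, hite j]
    rw [Finset.sum_congr rfl fun j _ => h2 j, ← Finset.sum_mul]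
  have htriple : ∀ m k i : Fin K, ∑ l, X m l * X k l * X i l
      = (L : ℝ) * c + (if k = i then (L : ℝ) * b - (L : ℝ) * c else 0)
        + (if m = k then (L : ℝ) * b - (L : ℝ) * c else 0)
        + (if m = i then (L : ℝ) * b - (L : ℝ) * c else 0)
        + (if m = k then (if m = i then (L : ℝ) * a - 3 * ((L : ℝ) * b) + 2 * ((L : ℝ) * c)
            else 0) else 0) := by
    intro m k i
    by_cases h1 : m = k
    · subst h1
      by_cases h2 : m = i
      · subst h2
        have e : ∑ l, X m l * X m l * X m l = (L : ℝ) * a := by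
          simp only [hid]; exact ha' m
        rw [e]; simp only [eq_self_iff_true, if_true]; ring
      · have e : ∑ l, X m l * X m l * X i l = (L : ℝ) * b := by
          simp only [hid]; exact hb' m i h2
        rw [e]; simp only [eq_self_iff_true, if_true, if_neg h2]; ring
    · by_cases h2 : m = i
      · subst h2
        have e : ∑ l, X m l * X k l * X m l = (L : ℝ) * b := by
          have hrw : ∀ l, X m l * X k l * X m l = X m l * X k l := by
            intro l; rw [mul_right_comm, hid]
          rw [Finset.sum_congr rfl fun l _ => hrw l]
          exact hb' m k h1
        rw [e]
        simp only [eq_self_iff_true, if_true, if_neg h1,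
          if_neg (show ¬k = m from fun h => h1 h.symm)]
        ring
      · by_cases h3 : k = i
        · subst h3
          have e : ∑ l, X m l * X k l * X k l = (L : ℝ) * b := by
            rw [Finset.sum_congr rfl fun l _ => by rw [mul_assoc, hid]]
            exact hb' m k h1
          rw [e]; simp only [eq_self_iff_true, if_true, if_neg h1]; ring
        · rw [hc' m k i h1 h2 h3]
          simp only [if_neg h1, if_neg h2, if_neg h3]
          ring
  have e5 : ∀ (m : Fin K) (w : ℝ),
      ∑ k : Fin K, ∑ i : Fin K, (if m = k then (if m = i then w else 0) else 0) = w := by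
    intro m w
    rw [Finset.sum_eq_single m]
    · simp
    · intro k _ hk; simp [if_neg (Ne.symm hk)]
    · intro h; exact absurd (Finset.mem_univ m) h
  have hdbl : ∀ m : Fin K, ∑ k : Fin K, ∑ i : Fin K, (∑ l, X m l * X k l * X i l)
      = (L : ℝ) * a + 3 * ((L : ℝ) * b) * ((K : ℝ) - 1)
        + (L : ℝ) * c * ((K : ℝ) - 1) * ((K : ℝ) - 2) := by
    intro m
    simp only [htriple, Finset.sum_add_distrib]
    rw [e5 m ((L : ℝ) * a - 3 * ((L : ℝ) * b) + 2 * ((L : ℝ) * c))]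
    simp only [eEq2, eK, mul_ite, mul_zero]
    ring
  have hSA : ∑ k : Fin K, ∑ i : Fin K, (X * Matrix.diagonal (Xᵀ.mulVec lam) * Xᵀ) k i
      = (∑ j, lam j) * ((L : ℝ) * a + 3 * ((L : ℝ) * b) * ((K : ℝ) - 1)
          + (L : ℝ) * c * ((K : ℝ) - 1) * ((K : ℝ) - 2)) := by
    simp only [hA]
    have h1 : ∀ k : Fin K, ∑ i : Fin K, ∑ j : Fin K, lam j * ∑ l, X j l * X k l * X i l
        = ∑ j : Fin K, ∑ i : Fin K, lam j * ∑ l, X j l * X k l * X i l := by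
      intro k; exact Finset.sum_comm
    rw [Finset.sum_congr rfl fun k _ => h1 k, Finset.sum_comm]
    have h2 : ∀ j : Fin K, ∑ k : Fin K, ∑ i : Fin K, lam j * ∑ l, X j l * X k l * X i l
        = lam j * ((L : ℝ) * a + 3 * ((L : ℝ) * b) * ((K : ℝ) - 1)
            + (L : ℝ) * c * ((K : ℝ) - 1) * ((K : ℝ) - 2)) := by
      intro j
      rw [Finset.sum_congr rfl fun k _ => (Finset.mul_sum _ _ _).symm, ← Finset.mul_sum,
        hdbl j]
    rw [Finset.sum_congr rfl fun j _ => h2 j, ← Finset.sum_mul]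
  have htrA : Matrix.trace (N * X * Matrix.diagonal (Xᵀ.mulVec lam) * Xᵀ * N)
      = s * ((∑ j, lam j) * ((L : ℝ) * a + 3 * ((L : ℝ) * b) * ((K : ℝ) - 1)
          + (L : ℝ) * c * ((K : ℝ) - 1) * ((K : ℝ) - 2)))
        + p ^ 2 * ((∑ j, lam j) * ((L : ℝ) * a + ((K : ℝ) - 1) * ((L : ℝ) * b))) := by
    have h1 : N * X * Matrix.diagonal (Xᵀ.mulVec lam) * Xᵀ
        = N * (X * Matrix.diagonal (Xᵀ.mulVec lam) * Xᵀ) := by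
      simp only [Matrix.mul_assoc]
    rw [h1, Matrix.trace_mul_comm, ← Matrix.mul_assoc]
    have h2 : Matrix.trace (N * N * (X * Matrix.diagonal (Xᵀ.mulVec lam) * Xᵀ))
        = ∑ i, ∑ k, (N * N) i k * (X * Matrix.diagonal (Xᵀ.mulVec lam) * Xᵀ) k i := by
      simp only [Matrix.trace, Matrix.diag_apply, Matrix.mul_apply]
    rw [h2]
    have h3 : ∀ i k : Fin K, (N * N) i k * (X * Matrix.diagonal (Xᵀ.mulVec lam) * Xᵀ) k i
        = s * (X * Matrix.diagonal (Xᵀ.mulVec lam) * Xᵀ) k i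
          + (if i = k then p ^ 2 * (X * Matrix.diagonal (Xᵀ.mulVec lam) * Xᵀ) k i else 0) := by
      intro i k
      rw [hNN]
      split <;> ring
    simp only [h3, Finset.sum_add_distrib, Finset.sum_ite_eq, Finset.mem_univ, if_true]
    rw [show (∑ i : Fin K, ∑ k : Fin K,
          s * (X * Matrix.diagonal (Xᵀ.mulVec lam) * Xᵀ) k i)
        = s * ∑ i : Fin K, ∑ k : Fin K, (X * Matrix.diagonal (Xᵀ.mulVec lam) * Xᵀ) k i by
      simp only [← Finset.mul_sum]]
    rw [Finset.sum_comm, hSA]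
    rw [show (∑ i : Fin K, p ^ 2 * (X * Matrix.diagonal (Xᵀ.mulVec lam) * Xᵀ) i i)
        = p ^ 2 * ∑ i : Fin K, (X * Matrix.diagonal (Xᵀ.mulVec lam) * Xᵀ) i i by
      rw [← Finset.mul_sum]]
    rw [hTA]
  rw [htrA, htrN]
  rw [hsdef, hpdef, hqdef, hγdef, hαdef]
  field_simp
  ring
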